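/- Let h : ℝᵐ → ℝ be differentiable with L-Lipschitz gradient. For any x, g ∈ ℝᵐ and β > 0, the inexact gradient step x⁺ = x − βg satisfies h(x⁺) ≤ h(x) − (β/2 − β²L)‖∇h(x)‖² + (β/2 + β²L)‖g − ∇h(x)‖². -/

import Mathlib

open InnerProductSpace

local notation "⟪" x ", " y "⟫" => @inner ℝ _ _ x y

lemma descent_quad {m : ℕ}
    (h : EuclideanSpace ℝ (Fin m) → ℝ)
    (grad : EuclideanSpace ℝ (Fin m) → EuclideanSpace ℝ (Fin m))
    (hgrad : ∀ x, HasGradientAt h (grad x) x)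
    (L : ℝ) (hL : 0 < L)
    (hLip : ∀ x₁ x₂, ‖grad x₁ - grad x₂‖ ≤ L * ‖x₁ - x₂‖)
    (x y : EuclideanSpace ℝ (Fin m)) :
    h y ≤ h x + ⟪grad x, y - x⟫ + L / 2 * ‖y - x‖ ^ 2 := by
  set v := y - x with hv
  set ψ : ℝ → ℝ := fun t => h (x + t • v) - t * ⟪grad x, v⟫ - L / 2 * t ^ 2 * ‖v‖ ^ 2
    with hψ
  have hderiv : ∀ t : ℝ, HasDerivAt ψ
      (⟪grad (x + t • v), v⟫ - ⟪grad x, v⟫ - L * t * ‖v‖ ^ 2) t := by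
    intro t
    have hline : HasDerivAt (fun t : ℝ => x + t • v) v t := by
      simpa using ((hasDerivAt_id t).smul_const v).const_add x
    have h1 : HasDerivAt (fun t : ℝ => h (x + t • v)) ⟪grad (x + t • v), v⟫ t := by
      have := ((hgrad (x + t • v)).hasFDerivAt.comp_hasDerivAt t hline)
      exact this
    have h2 : HasDerivAt (fun t : ℝ => t * ⟪grad x, v⟫) ⟪grad x, v⟫ t := by
      simpa using (hasDerivAt_id t).mul_const ⟪grad x, v⟫
    have h3 : HasDerivAt (fun t : ℝ => L / 2 * t ^ 2 * ‖v‖ ^ 2) (L * t * ‖v‖ ^ 2) t := by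
      have := (((hasDerivAt_pow 2 t)).const_mul (L / 2)).mul_const (‖v‖ ^ 2)
      refine this.congr_deriv ?_
      ring
    exact (h1.sub h2).sub h3
  have hanti : AntitoneOn ψ (Set.Icc 0 1) := by
    apply antitoneOn_of_deriv_nonpos (convex_Icc 0 1)
    · exact (Differentiable.continuous (fun t => (hderiv t).differentiableAt)).continuousOn
    · intro t ht
      exact (hderiv t).differentiableAt.differentiableWithinAt
    · intro t ht
      rw [interior_Icc] at ht
      rw [(hderiv t).deriv]
      have hcs : ⟪grad (x + t • v) - grad x, v⟫ ≤ ‖grad (x + t • v) - grad x‖ * ‖v‖ :=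
        real_inner_le_norm _ _
      have hlip : ‖grad (x + t • v) - grad x‖ ≤ L * (t * ‖v‖) := by
        have := hLip (x + t • v) x
        simpa [norm_smul, abs_of_nonneg ht.1.le, mul_assoc] using this
      have : ⟪grad (x + t • v), v⟫ - ⟪grad x, v⟫ ≤ L * t * ‖v‖ ^ 2 := by
        rw [← inner_sub_left]
        calc ⟪grad (x + t • v) - grad x, v⟫ ≤ ‖grad (x + t • v) - grad x‖ * ‖v‖ := hcs
          _ ≤ L * (t * ‖v‖) * ‖v‖ := by
              apply mul_le_mul_of_nonneg_right hlip (norm_nonneg v)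
          _ = L * t * ‖v‖ ^ 2 := by ring
      linarith
  have key := hanti (Set.left_mem_Icc.mpr zero_le_one) (Set.right_mem_Icc.mpr zero_le_one)
    zero_le_one
  simp only [ψ] at key
  have : x + (1 : ℝ) • v = y := by rw [one_smul, hv]; abel
  rw [this] at key
  simp only [zero_smul, add_zero, zero_mul, one_pow, one_mul, mul_zero, sub_zero] at key
  linarith

theorem inexact_descent_lemma {m : ℕ}
    (h : EuclideanSpace ℝ (Fin m) → ℝ)
    (grad : EuclideanSpace ℝ (Fin m) → EuclideanSpace ℝ (Fin m))
    (hgrad : ∀ x, HasGradientAt h (grad x) x)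
    (L : ℝ) (hL : 0 < L)
    (hLip : ∀ x₁ x₂, ‖grad x₁ - grad x₂‖ ≤ L * ‖x₁ - x₂‖)
    (x g : EuclideanSpace ℝ (Fin m)) (β : ℝ) (hβ : 0 < β) :
    h (x - β • g) ≤ h x - (β / 2 - β ^ 2 * L) * ‖grad x‖ ^ 2 +
      (β / 2 + β ^ 2 * L) * ‖g - grad x‖ ^ 2 := by
  have hq := descent_quad h grad hgrad L hL hLip x (x - β • g)
  have h1 : x - β • g - x = -(β • g) := by abel
  rw [h1] at hq
  have hinner : ⟪grad x, -(β • g)⟫ = -β * ⟪grad x, g⟫ := by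
    rw [inner_neg_right, real_inner_smul_right]; ring
  have hnorm : ‖(-(β • g) : EuclideanSpace ℝ (Fin m))‖ ^ 2 = β ^ 2 * ‖g‖ ^ 2 := by
    rw [norm_neg, norm_smul]
    simp [abs_of_pos hβ, mul_pow]
  rw [hinner, hnorm] at hq
  -- decompose g = grad x + (g - grad x)
  have hsplit : ⟪grad x, g⟫ = ‖grad x‖ ^ 2 + ⟪grad x, g - grad x⟫ := by
    rw [inner_sub_right, real_inner_self_eq_norm_sq]; ring
  have hyoung : -⟪grad x, g - grad x⟫ ≤ 1 / 2 * ‖grad x‖ ^ 2 + 1 / 2 * ‖g - grad x‖ ^ 2 := by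
    have := abs_real_inner_le_norm (grad x) (g - grad x)
    have h2 : -⟪grad x, g - grad x⟫ ≤ ‖grad x‖ * ‖g - grad x‖ := by
      have := neg_abs_le ⟪grad x, g - grad x⟫
      nlinarith [abs_real_inner_le_norm (grad x) (g - grad x)]
    nlinarith [sq_nonneg (‖grad x‖ - ‖g - grad x‖)]
  have hgsq : ‖g‖ ^ 2 ≤ 2 * ‖grad x‖ ^ 2 + 2 * ‖g - grad x‖ ^ 2 := by
    have : g = grad x + (g - grad x) := by abel
    calc ‖g‖ ^ 2 = ‖grad x + (g - grad x)‖ ^ 2 := by rw [← this]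
      _ ≤ (‖grad x‖ + ‖g - grad x‖) ^ 2 := by
          have := norm_add_le (grad x) (g - grad x)
          nlinarith [norm_nonneg (grad x + (g - grad x))]
      _ ≤ 2 * ‖grad x‖ ^ 2 + 2 * ‖g - grad x‖ ^ 2 := by
          nlinarith [sq_nonneg (‖grad x‖ - ‖g - grad x‖)]
  nlinarith [hq, mul_le_mul_of_nonneg_left hgsq (le_of_lt (by positivity : (0:ℝ) < L * β ^ 2 / 2)),
    mul_le_mul_of_nonneg_left hyoung hβ.le]
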